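/- Let s, t, p be nonzero real numbers with 0 < s < t, and suppose p ≥ max(2s, (2/3)(s+t)), with the strict inequality p > 2s required in case t = 2s. Then for all positive real numbers a ≠ b, 2^{p/t − p/s} < (M_s(a,b)^p − G(a,b)^p)/(M_t(a,b)^p − G(a,b)^p) < s/t. -/

import Mathlib

set_option maxHeartbeats 1000000
open Real Set

lemma pos_of_hasDeriv {f f' : ℝ → ℝ} {c : ℝ} (hc : 0 < c)
    (hd : ∀ x ∈ Set.Icc 0 c, HasDerivAt f (f' x) x)
    (hpos : ∀ x ∈ Set.Ioo 0 c, 0 < f' x) (h0 : f 0 = 0) : 0 < f c := by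
  have hmono := strictMonoOn_of_deriv_pos (convex_Icc 0 c)
    (fun x hx => (hd x hx).continuousAt.continuousWithinAt)
    (by rw [interior_Icc]; intro x hx
        rw [(hd x (Ioo_subset_Icc_self hx)).deriv]; exact hpos x hx)
  have := hmono (left_mem_Icc.2 hc.le) (right_mem_Icc.2 hc.le) hc
  rwa [h0] at this

lemma hd_sinh_mul (a x : ℝ) :
    HasDerivAt (fun y => Real.sinh (a * y)) (a * Real.cosh (a * x)) x := by
  have h := ((hasDerivAt_id x).const_mul a).sinh
  simpa [mul_comm] using h

/-- sinh(μθ) < μ sinh θ for 0 < μ < 1, θ > 0. -/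
lemma sinh_mul_lt {μ θ : ℝ} (h0 : 0 < μ) (h1 : μ < 1) (hθ : 0 < θ) :
    Real.sinh (μ * θ) < μ * Real.sinh θ := by
  have key : 0 < μ * Real.sinh θ - Real.sinh (μ * θ) := by
    apply pos_of_hasDeriv (f := fun x => μ * Real.sinh x - Real.sinh (μ * x))
      (f' := fun x => μ * Real.cosh x - μ * Real.cosh (μ * x)) hθ
    · intro x _
      exact ((Real.hasDerivAt_sinh x).const_mul μ).sub (hd_sinh_mul μ x)
    · intro x hx
      obtain ⟨hx1, _⟩ := hx
      have h2 : Real.cosh (μ * x) < Real.cosh x := by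
        rw [Real.cosh_lt_cosh, abs_of_pos (by positivity : (0:ℝ) < μ * x), abs_of_pos hx1]
        nlinarith
      nlinarith
    · simp
  linarith

/-- λ sinh((λ−1)θ) < (λ−1) sinh(λθ) for λ > 1, θ > 0. -/
lemma sinh_mul_gt {l θ : ℝ} (hl : 1 < l) (hθ : 0 < θ) :
    l * Real.sinh ((l - 1) * θ) < (l - 1) * Real.sinh (l * θ) := by
  have key : 0 < (l - 1) * Real.sinh (l * θ) - l * Real.sinh ((l - 1) * θ) := by
    apply pos_of_hasDeriv
      (f := fun x => (l - 1) * Real.sinh (l * x) - l * Real.sinh ((l - 1) * x))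
      (f' := fun x => (l - 1) * (l * Real.cosh (l * x)) - l * ((l - 1) * Real.cosh ((l - 1) * x)))
      hθ
    · intro x _
      exact ((hd_sinh_mul l x).const_mul (l - 1)).sub ((hd_sinh_mul (l - 1) x).const_mul l)
    · intro x hx
      have h2 : Real.cosh ((l - 1) * x) < Real.cosh (l * x) := by
        rw [Real.cosh_lt_cosh, abs_of_pos (by nlinarith [hx.1] : (0:ℝ) < (l - 1) * x),
          abs_of_pos (by nlinarith [hx.1] : (0:ℝ) < l * x)]
        nlinarith [hx.1]
      have h3 : 0 < (l - 1) * l := by nlinarith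
      nlinarith [mul_lt_mul_of_pos_left h2 h3]
    · simp
  linarith

lemma hd_cosh_mul (a x : ℝ) :
    HasDerivAt (fun y => Real.cosh (a * y)) (a * Real.sinh (a * x)) x := by
  have h := ((hasDerivAt_id x).const_mul a).cosh
  simpa [mul_comm] using h

/-- (λ−2) sinh(λθ) + (2λ−1) sinh θ > (λ+1) sinh((λ−1)θ) for λ > 2, θ > 0. -/
lemma J_pos {l θ : ℝ} (hl : 2 < l) (hθ : 0 < θ) :
    0 < (l - 2) * Real.sinh (l * θ) + (2 * l - 1) * Real.sinh θ
        - (l + 1) * Real.sinh ((l - 1) * θ) := by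
  set J : ℝ → ℝ := fun x => (l - 2) * Real.sinh (l * x) + (2 * l - 1) * Real.sinh x
      - (l + 1) * Real.sinh ((l - 1) * x) with hJ
  set J' : ℝ → ℝ := fun x => (l - 2) * (l * Real.cosh (l * x)) + (2 * l - 1) * Real.cosh x
      - (l + 1) * ((l - 1) * Real.cosh ((l - 1) * x)) with hJ'
  have hdJ : ∀ x : ℝ, HasDerivAt J (J' x) x := fun x =>
    (((hd_sinh_mul l x).const_mul (l - 2)).add
      ((Real.hasDerivAt_sinh x).const_mul (2 * l - 1))).sub
      ((hd_sinh_mul (l - 1) x).const_mul (l + 1))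
  have hdJ' : ∀ x : ℝ, HasDerivAt J'
      ((l - 2) * (l * (l * Real.sinh (l * x))) + (2 * l - 1) * Real.sinh x
        - (l + 1) * ((l - 1) * ((l - 1) * Real.sinh ((l - 1) * x)))) x := fun x =>
    ((((hd_cosh_mul l x).const_mul l).const_mul (l - 2)).add
      ((Real.hasDerivAt_cosh x).const_mul (2 * l - 1))).sub
      (((hd_cosh_mul (l - 1) x).const_mul (l - 1)).const_mul (l + 1))
  -- R := exp(−x) * (J' x + J x) is positive on (0, ∞)
  have hR : ∀ y : ℝ, 0 < y → 0 < Real.exp (-y) * (J' y + J y) := by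
    intro y hy
    apply pos_of_hasDeriv (f := fun x => Real.exp (-x) * (J' x + J x))
      (f' := fun x => Real.exp (-x) * ((l - 2) * (l * (l * Real.sinh (l * x))) + (2 * l - 1) * Real.sinh x
        - (l + 1) * ((l - 1) * ((l - 1) * Real.sinh ((l - 1) * x))) - J x)) hy
    · intro x _
      have h1 : HasDerivAt (fun x : ℝ => Real.exp (-x)) (-Real.exp (-x)) x := by
        simpa using ((hasDerivAt_id x).neg).exp
      have h2 := ((hdJ' x).add (hdJ x))
      have := h1.mul h2
      refine this.congr_deriv ?_
      simp only [Pi.add_apply]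
      ring
    · intro x hx
      have hq := sinh_mul_gt (by linarith : (1:ℝ) < l) hx.1
      have hkey : J' x + J x - J x = J' x := by ring
      have hexp : 0 < Real.exp (-x) := Real.exp_pos _
      -- J'' − J = (l+1)(l−2)((l−1) sinh(lθ) − l sinh((l−1)θ))
      have hiden : (l - 2) * (l * (l * Real.sinh (l * x))) + (2 * l - 1) * Real.sinh x
          - (l + 1) * ((l - 1) * ((l - 1) * Real.sinh ((l - 1) * x))) - J x
          = (l + 1) * (l - 2) * ((l - 1) * Real.sinh (l * x) - l * Real.sinh ((l - 1) * x)) := by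
        simp only [hJ]; ring
      rw [hiden]
      have : 0 < (l + 1) * (l - 2) := by nlinarith
      exact mul_pos hexp (mul_pos this (by linarith))
    · have : J' 0 + J 0 = 0 := by simp [hJ, hJ']; ring
      simp [this]
  -- exp x * J x is positive
  have hP : 0 < Real.exp θ * J θ := by
    apply pos_of_hasDeriv (f := fun x => Real.exp x * J x)
      (f' := fun x => Real.exp x * (J x + J' x)) hθ
    · intro x _
      have := (Real.hasDerivAt_exp x).mul (hdJ x)
      refine this.congr_deriv ?_; ring
    · intro x hx
      have := hR x hx.1
      have hh : 0 < J' x + J x := by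
        have hexp : 0 < Real.exp (-x) := Real.exp_pos _
        nlinarith
      have : 0 < Real.exp x := Real.exp_pos _
      nlinarith
    · simp [hJ]
  have h9 : 0 < Real.exp (-θ) * (Real.exp θ * J θ) := mul_pos (Real.exp_pos _) hP
  rw [← mul_assoc, ← Real.exp_add, neg_add_cancel, Real.exp_zero, one_mul] at h9
  simpa [hJ] using h9

/-- Core positivity: the numerator inequality for H' < 0. -/
lemma CP {u l α : ℝ} (hu0 : 0 < u) (hu1 : u < 1) (hl : 1 < l)
    (hα2 : 2 ≤ α) (hα3 : 2 * (1 + l) / 3 ≤ α) (hexc : l = 2 → 2 < α) :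
    2 * (1 - (u ^ l) ^ 2) - 2 * l * u ^ (l - 1) * (1 - u ^ 2)
      < α * (1 - u) * (1 - u ^ l) * (1 - u ^ (l - 1)) := by
  set θ : ℝ := -Real.log u with hθdef
  have hθ : 0 < θ := by
    have := Real.log_neg hu0 hu1
    simp only [hθdef]; linarith
  have hu : Real.exp (-θ) = u := by
    simp [hθdef, Real.exp_log hu0]
  set A : ℝ := u ^ (l - 1) with hAdef
  have hA0 : 0 < A := Real.rpow_pos_of_pos hu0 _
  have hA1 : A < 1 := Real.rpow_lt_one hu0.le hu1 (by linarith)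
  have hAexp : Real.exp (-((l - 1) * θ)) = A := by
    rw [hAdef, Real.rpow_def_of_pos hu0]
    congr 1
    simp only [hθdef]; ring
  have hul : u ^ l = A * u := by
    have h : u ^ l = u ^ (l - 1) * u ^ (1 : ℝ) := by
      rw [← Real.rpow_add hu0]; norm_num
    rw [h, Real.rpow_one]
  have hulexp : Real.exp (-(l * θ)) = A * u := by
    rw [← hAexp, ← hu, ← Real.exp_add]; congr 1; ring
  have euinv : Real.exp θ = u⁻¹ := by
    rw [← hu, ← Real.exp_neg, neg_neg]
  have eAinv : Real.exp ((l - 1) * θ) = A⁻¹ := by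
    rw [← hAexp, ← Real.exp_neg, neg_neg]
  have eAuinv : Real.exp (l * θ) = (A * u)⁻¹ := by
    rw [← hulexp, ← Real.exp_neg, neg_neg]
  have s3 : Real.sinh θ = (u⁻¹ - u) / 2 := by
    rw [Real.sinh_eq, euinv, hu]
  have s2 : Real.sinh ((l - 1) * θ) = (A⁻¹ - A) / 2 := by
    rw [Real.sinh_eq, eAinv, hAexp]
  have s1 : Real.sinh (l * θ) = ((A * u)⁻¹ - A * u) / 2 := by
    rw [Real.sinh_eq, eAuinv, hulexp]
  have hAu0 : 0 < A * u := mul_pos hA0 hu0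
  have hiA : A⁻¹ * A = 1 := inv_mul_cancel₀ hA0.ne'
  have hiu : u⁻¹ * u = 1 := inv_mul_cancel₀ hu0.ne'
  have hiAu : (A * u)⁻¹ * (A * u) = 1 := inv_mul_cancel₀ hAu0.ne'
  -- D > 0
  have hD : 0 < (1 - u) * (1 - A * u) * (1 - A) := by
    have hAu1 : A * u < 1 := by nlinarith
    have := mul_pos (mul_pos (by linarith : (0:ℝ) < 1 - u) (by linarith : (0:ℝ) < 1 - A * u))
      (by linarith : (0:ℝ) < 1 - A)
    linarith
  clear_value θ A
  rw [hul]
  rcases lt_trichotomy l 2 with hc | hc | hc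
  · -- Case l < 2 : use sinh_mul_lt with μ = l - 1
    have hs := sinh_mul_lt (by linarith : (0:ℝ) < l - 1) (by linarith) hθ
    rw [s2, s3] at hs
    have hmul := mul_lt_mul_of_pos_right hs hAu0
    have key1 : (l - 1) * ((u⁻¹ - u) / 2) * (A * u) - (A⁻¹ - A) / 2 * (A * u)
        = ((l - 1) * A * (1 - u ^ 2) - (u - A ^ 2 * u)) / 2 := by
      field_simp
    have hG : 0 < A ^ 2 * u - u + (l - 1) * A * (1 - u ^ 2) := by linarith
    have key2 : α * (1 - u) * (1 - A * u) * (1 - A)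
        - (2 * (1 - (A * u) ^ 2) - 2 * l * A * (1 - u ^ 2))
        = (α - 2) * ((1 - u) * (1 - A * u) * (1 - A))
          + 2 * (A ^ 2 * u - u + (l - 1) * A * (1 - u ^ 2)) := by ring
    nlinarith [mul_nonneg (by linarith : (0:ℝ) ≤ α - 2) hD.le]
  · -- Case l = 2
    subst hc
    have hA' : A = u := by rw [hAdef]; norm_num [Real.rpow_one]
    have hα' := hexc rfl
    rw [hA']
    have h1 : (0:ℝ) < 1 - u := by linarith
    have h2 : (0:ℝ) < 1 - u ^ 2 := by nlinarith
    have key : α * (1 - u) * (1 - u * u) * (1 - u)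
        - (2 * (1 - (u * u) ^ 2) - 2 * 2 * u * (1 - u ^ 2))
        = (α - 2) * ((1 - u) ^ 2 * (1 - u ^ 2)) := by ring
    have hpos : 0 < (α - 2) * ((1 - u) ^ 2 * (1 - u ^ 2)) :=
      mul_pos (by linarith) (mul_pos (pow_pos h1 2) h2)
    linarith
  · -- Case l > 2 : use J_pos
    have hs := J_pos hc hθ
    rw [s1, s2, s3] at hs
    have hmul := mul_lt_mul_of_pos_right hs hAu0
    have key1 : ((l - 2) * (((A * u)⁻¹ - A * u) / 2) + (2 * l - 1) * ((u⁻¹ - u) / 2)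
          - (l + 1) * ((A⁻¹ - A) / 2)) * (A * u)
        = ((l - 2) * (1 - A ^ 2 * u ^ 2) + (2 * l - 1) * (A - A * u ^ 2)
          - (l + 1) * (u - A ^ 2 * u)) / 2 := by
      field_simp
    have hE : 0 < (l - 2) * (1 - A ^ 2 * u ^ 2) + (2 * l - 1) * (A - A * u ^ 2)
        - (l + 1) * (u - A ^ 2 * u) := by
      rw [zero_mul] at hmul
      linarith [key1 ▸ hmul]
    have key2 : α * (1 - u) * (1 - A * u) * (1 - A)
        - (2 * (1 - (A * u) ^ 2) - 2 * l * A * (1 - u ^ 2))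
        = (α - 2 * (1 + l) / 3) * ((1 - u) * (1 - A * u) * (1 - A))
          + (2 / 3) * ((l - 2) * (1 - A ^ 2 * u ^ 2) + (2 * l - 1) * (A - A * u ^ 2)
            - (l + 1) * (u - A ^ 2 * u)) := by ring
    nlinarith [mul_nonneg (by linarith : (0:ℝ) ≤ α - 2 * (1 + l) / 3) hD.le]

/-- Master lemma: both pointwise inequalities, via strict antitonicity of H on [0,1). -/
lemma master {l α : ℝ} (hl : 1 < l) (hα2 : 2 ≤ α) (hα3 : 2 * (1 + l) / 3 ≤ α)
    (hexc : l = 2 → 2 < α) {u : ℝ} (hu0 : 0 < u) (hu1 : u < 1) :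
    (1 - u ^ l) * (1 + u ^ l) ^ (α / l - 1) < (1 - u) * (1 + u) ^ (α - 1) ∧
    l * ((2:ℝ) ^ (α / l - α) * ((1 - u) * (1 + u) ^ (α - 1)))
      < (1 - u ^ l) * (1 + u ^ l) ^ (α / l - 1) := by
  have hl0 : (0:ℝ) < l := by linarith
  set β : ℝ := α / l with hβdef
  have hβl : l * β = α := by rw [hβdef]; field_simp
  set H : ℝ → ℝ := fun v => Real.log (1 - v ^ l) + (β - 1) * Real.log (1 + v ^ l)
      - Real.log (1 - v) - (α - 1) * Real.log (1 + v) with hHdef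
  set H' : ℝ → ℝ := fun v => (-(l * v ^ (l - 1))) / (1 - v ^ l)
      + (β - 1) * ((l * v ^ (l - 1)) / (1 + v ^ l))
      + 1 / (1 - v) - (α - 1) * (1 / (1 + v)) with hH'def
  -- basic facts about v ∈ Ioo 0 1
  have hw_facts : ∀ v : ℝ, v ∈ Set.Ioo (0:ℝ) 1 → 0 < v ^ l ∧ v ^ l < 1 := by
    intro v hv
    exact ⟨Real.rpow_pos_of_pos hv.1 _, Real.rpow_lt_one hv.1.le hv.2 hl0⟩
  -- derivative
  have hHd : ∀ v ∈ Set.Ioo (0:ℝ) 1, HasDerivAt H (H' v) v := by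
    intro v hv
    obtain ⟨hw0, hw1⟩ := hw_facts v hv
    have hrp : HasDerivAt (fun x : ℝ => x ^ l) (l * v ^ (l - 1)) v :=
      Real.hasDerivAt_rpow_const (Or.inl hv.1.ne')
    have h1 : HasDerivAt (fun x : ℝ => 1 - x ^ l) (-(l * v ^ (l - 1))) v := by
      exact hrp.const_sub 1
    have h2 : HasDerivAt (fun x : ℝ => 1 + x ^ l) (l * v ^ (l - 1)) v := by
      exact hrp.const_add 1
    have h3 : HasDerivAt (fun x : ℝ => 1 - x) (-1 : ℝ) v := by
      simpa using (hasDerivAt_id v).const_sub 1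
    have h4 : HasDerivAt (fun x : ℝ => 1 + x) (1 : ℝ) v := by
      simpa using (hasDerivAt_id v).const_add 1
    have l1 := h1.log (by linarith : (0:ℝ) < 1 - v ^ l).ne'
    have l2 := (h2.log (by linarith : (0:ℝ) < 1 + v ^ l).ne').const_mul (β - 1)
    have l3 := h3.log (by linarith [hv.2] : (0:ℝ) < 1 - v).ne'
    have l4 := (h4.log (by linarith [hv.1] : (0:ℝ) < 1 + v).ne').const_mul (α - 1)
    have := ((l1.add l2).sub l3).sub l4
    refine this.congr_deriv ?_
    simp only [H']
    field_simp
    ring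
  -- derivative negative
  have hH'neg : ∀ v ∈ Set.Ioo (0:ℝ) 1, H' v < 0 := by
    intro v hv
    obtain ⟨hw0, hw1⟩ := hw_facts v hv
    have hv0 := hv.1; have hv1 := hv.2
    have hA0 : 0 < v ^ (l - 1) := Real.rpow_pos_of_pos hv0 _
    have hwA : v ^ l = v ^ (l - 1) * v := by
      have h := Real.rpow_add hv0 (l - 1) 1
      rw [Real.rpow_one] at h
      have h2 : l - 1 + 1 = l := by ring
      rw [h2] at h
      exact h
    have hcp := CP hv0 hv1 hl hα2 hα3 hexc
    set A := v ^ (l - 1) with hAdef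
    set w := v ^ l with hwdef
    have hnum : (-(l * A)) * ((1 + w) * ((1 - v) * (1 + v)))
        + (β - 1) * (l * A) * ((1 - w) * ((1 - v) * (1 + v)))
        + (1 - w) * (1 + w) * (1 + v) - (α - 1) * ((1 - w) * (1 + w) * (1 - v)) < 0 := by
      have hid : (-(l * A)) * ((1 + w) * ((1 - v) * (1 + v)))
          + (β - 1) * (l * A) * ((1 - w) * ((1 - v) * (1 + v)))
          + (1 - w) * (1 + w) * (1 + v) - (α - 1) * ((1 - w) * (1 + w) * (1 - v))
          = -(α * (1 - v) * (1 - w) * (1 - A)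
              - (2 * (1 - w ^ 2) - 2 * l * A * (1 - v ^ 2))) := by
        rw [hwA]
        linear_combination (A * (1 - v^2) * (1 - A*v)) * hβl
      rw [hid]
      linarith [hcp]
    -- assemble H' v as a single fraction
    have d1 : (0:ℝ) < 1 - w := by linarith
    have d2 : (0:ℝ) < 1 + w := by linarith
    have d3 : (0:ℝ) < 1 - v := by linarith
    have d4 : (0:ℝ) < 1 + v := by linarith
    have hfrac : H' v = ((-(l * A)) * ((1 + w) * ((1 - v) * (1 + v)))
        + (β - 1) * (l * A) * ((1 - w) * ((1 - v) * (1 + v)))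
        + (1 - w) * (1 + w) * (1 + v) - (α - 1) * ((1 - w) * (1 + w) * (1 - v)))
        / ((1 - w) * (1 + w) * (1 - v) * (1 + v)) := by
      simp only [hH'def]
      rw [← hwdef, ← hAdef]
      field_simp
    rw [hfrac]
    exact div_neg_of_neg_of_pos hnum (by positivity)
  -- continuity on Ico 0 1
  have hHcont : ContinuousOn H (Set.Ico (0:ℝ) 1) := by
    intro v hv
    apply ContinuousAt.continuousWithinAt
    have hv0 : (0:ℝ) ≤ v := hv.1
    have hv1 : v < 1 := hv.2
    have hrpc : ContinuousAt (fun x : ℝ => x ^ l) v :=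
      Real.continuousAt_rpow_const v l (Or.inr hl0.le)
    have hwlt : v ^ l < 1 := by
      rcases eq_or_lt_of_le hv0 with h | h
      · rw [← h, Real.zero_rpow hl0.ne']; norm_num
      · exact Real.rpow_lt_one hv0 hv1 hl0
    have hwnn : 0 ≤ v ^ l := Real.rpow_nonneg hv0 _
    have c1 : ContinuousAt (fun x : ℝ => Real.log (1 - x ^ l)) v :=
      ((continuousAt_const.sub hrpc).log (by linarith : (0:ℝ) < 1 - v ^ l).ne')
    have c2 : ContinuousAt (fun x : ℝ => Real.log (1 + x ^ l)) v :=
      ((continuousAt_const.add hrpc).log (by linarith : (0:ℝ) < 1 + v ^ l).ne')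
    have c3 : ContinuousAt (fun x : ℝ => Real.log (1 - x)) v :=
      ((continuousAt_const.sub continuousAt_id).log (by linarith : (0:ℝ) < 1 - v).ne')
    have c4 : ContinuousAt (fun x : ℝ => Real.log (1 + x)) v :=
      ((continuousAt_const.add continuousAt_id).log (by linarith : (0:ℝ) < 1 + v).ne')
    exact ((c1.add (c2.const_mul _)).sub c3).sub (c4.const_mul _)
  -- strict antitonicity
  have hanti : StrictAntiOn H (Set.Ico (0:ℝ) 1) := by
    apply strictAntiOn_of_deriv_neg (convex_Ico 0 1) hHcont
    intro v hv
    rw [interior_Ico] at hv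
    rw [(hHd v hv).deriv]
    exact hH'neg v hv
  have hH0 : H 0 = 0 := by
    simp [hHdef, Real.zero_rpow hl0.ne']
  have hHu_neg : H u < 0 := by
    have := hanti (Set.left_mem_Ico.2 one_pos) ⟨hu0.le, hu1⟩ hu0
    rwa [hH0] at this
  -- limit of H at 1⁻
  set L : ℝ := Real.log l - (α - β) * Real.log 2 with hLdef
  have hslope : Filter.Tendsto (fun v : ℝ => (1 - v ^ l) / (1 - v))
      (nhdsWithin 1 (Set.Iio 1)) (nhds l) := by
    have hd : HasDerivAt (fun x : ℝ => x ^ l) l 1 := by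
      have := Real.hasDerivAt_rpow_const (x := (1:ℝ)) (p := l) (Or.inl one_ne_zero)
      simpa [Real.one_rpow] using this
    rw [hasDerivAt_iff_tendsto_slope] at hd
    have hmono : nhdsWithin (1:ℝ) (Set.Iio 1) ≤ nhdsWithin 1 {(1:ℝ)}ᶜ :=
      nhdsWithin_mono 1 (fun x hx => ne_of_lt hx)
    have hd2 := hd.mono_left hmono
    apply hd2.congr'
    filter_upwards [self_mem_nhdsWithin] with v hv
    have hv1 : v < 1 := hv
    rw [slope_def_field]
    rw [div_eq_div_iff (sub_ne_zero.2 (ne_of_lt hv1)) (sub_ne_zero.2 (ne_of_gt hv1))]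
    rw [Real.one_rpow]
    ring
  have hrpw1 : Filter.Tendsto (fun v : ℝ => v ^ l) (nhdsWithin 1 (Set.Iio 1)) (nhds 1) := by
    have hc : ContinuousAt (fun v : ℝ => v ^ l) 1 :=
      Real.continuousAt_rpow_const 1 l (Or.inl one_ne_zero)
    have := hc.tendsto
    rw [Real.one_rpow] at this
    exact this.mono_left nhdsWithin_le_nhds
  have t1 : Filter.Tendsto (fun v : ℝ => Real.log ((1 - v ^ l) / (1 - v)))
      (nhdsWithin 1 (Set.Iio 1)) (nhds (Real.log l)) := hslope.log (by linarith)
  have t2 : Filter.Tendsto (fun v : ℝ => (β - 1) * Real.log (1 + v ^ l))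
      (nhdsWithin 1 (Set.Iio 1)) (nhds ((β - 1) * Real.log 2)) := by
    have : Filter.Tendsto (fun v : ℝ => (1:ℝ) + v ^ l) (nhdsWithin 1 (Set.Iio 1)) (nhds 2) := by
      have := (tendsto_const_nhds (x := (1:ℝ)) (f := nhdsWithin (1:ℝ) (Set.Iio 1))).add hrpw1
      norm_num at this
      exact this
    exact (this.log (by norm_num)).const_mul _
  have t3 : Filter.Tendsto (fun v : ℝ => (α - 1) * Real.log (1 + v))
      (nhdsWithin 1 (Set.Iio 1)) (nhds ((α - 1) * Real.log 2)) := by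
    have h0 : Filter.Tendsto (fun v : ℝ => (1:ℝ) + v) (nhdsWithin 1 (Set.Iio 1)) (nhds 2) := by
      have hid : Filter.Tendsto (fun v : ℝ => v) (nhdsWithin 1 (Set.Iio 1)) (nhds 1) :=
        Filter.tendsto_id.mono_left nhdsWithin_le_nhds
      have := (tendsto_const_nhds (x := (1:ℝ)) (f := nhdsWithin (1:ℝ) (Set.Iio 1))).add hid
      norm_num at this
      exact this
    exact (h0.log (by norm_num)).const_mul _
  have hlim : Filter.Tendsto H (nhdsWithin 1 (Set.Iio 1)) (nhds L) := by
    have hsum := (t1.add t2).sub t3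
    have hLeq : Real.log l + (β - 1) * Real.log 2 - (α - 1) * Real.log 2 = L := by
      rw [hLdef]; ring
    rw [hLeq] at hsum
    apply hsum.congr'
    filter_upwards [Ioo_mem_nhdsLT_of_mem (by norm_num : (1:ℝ) ∈ Set.Ioc (0:ℝ) 1)] with v hv
    obtain ⟨hw0, hw1⟩ := hw_facts v hv
    simp only [hHdef]
    rw [Real.log_div (by linarith : (0:ℝ) < 1 - v ^ l).ne' (by linarith [hv.2] : (0:ℝ) < 1 - v).ne']
    ring
  -- H u > L
  have hHu_gt : L < H u := by
    set v₁ : ℝ := (u + 1) / 2 with hv₁def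
    have hv₁mem : v₁ ∈ Set.Ico (0:ℝ) 1 := ⟨by simp only [hv₁def]; linarith, by simp only [hv₁def]; linarith⟩
    have h1 : H v₁ < H u := hanti ⟨hu0.le, hu1⟩ hv₁mem (by simp only [hv₁def]; linarith)
    have h2 : L ≤ H v₁ := by
      apply le_of_tendsto hlim
      filter_upwards [Ioo_mem_nhdsLT_of_mem
        (⟨hv₁mem.2, le_refl 1⟩ : (1:ℝ) ∈ Set.Ioc v₁ 1)] with v hv
      exact (hanti hv₁mem ⟨le_trans hv₁mem.1 hv.1.le, hv.2⟩ hv.1).le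
    linarith
  -- exponentiate
  obtain ⟨hw0, hw1⟩ := hw_facts u ⟨hu0, hu1⟩
  have hPu : 0 < (1 - u) * (1 + u) ^ (α - 1) :=
    mul_pos (by linarith) (Real.rpow_pos_of_pos (by linarith) _)
  have hPw : 0 < (1 - u ^ l) * (1 + u ^ l) ^ (β - 1) :=
    mul_pos (by linarith) (Real.rpow_pos_of_pos (by linarith) _)
  have hlogPu : Real.log ((1 - u) * (1 + u) ^ (α - 1))
      = Real.log (1 - u) + (α - 1) * Real.log (1 + u) := by
    rw [Real.log_mul (by linarith : (0:ℝ) < 1 - u).ne'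
      (Real.rpow_pos_of_pos (by linarith : (0:ℝ) < 1 + u) _).ne',
      Real.log_rpow (by linarith : (0:ℝ) < 1 + u)]
  have hlogPw : Real.log ((1 - u ^ l) * (1 + u ^ l) ^ (β - 1))
      = Real.log (1 - u ^ l) + (β - 1) * Real.log (1 + u ^ l) := by
    rw [Real.log_mul (by linarith : (0:ℝ) < 1 - u ^ l).ne'
      (Real.rpow_pos_of_pos (by linarith : (0:ℝ) < 1 + u ^ l) _).ne',
      Real.log_rpow (by linarith : (0:ℝ) < 1 + u ^ l)]
  have hHsplit : H u = Real.log ((1 - u ^ l) * (1 + u ^ l) ^ (β - 1))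
      - Real.log ((1 - u) * (1 + u) ^ (α - 1)) := by
    simp only [hHdef]
    rw [hlogPu, hlogPw]
    ring
  constructor
  · -- M1
    rw [← Real.exp_log hPw, ← Real.exp_log hPu]
    apply Real.exp_lt_exp.2
    rw [hHsplit] at hHu_neg
    linarith
  · -- M2
    have h2p : (0:ℝ) < (2:ℝ) ^ (β - α) := Real.rpow_pos_of_pos (by norm_num) _
    have hLHSpos : 0 < l * ((2:ℝ) ^ (β - α) * ((1 - u) * (1 + u) ^ (α - 1))) :=
      mul_pos hl0 (mul_pos h2p hPu)
    rw [← Real.exp_log hLHSpos, ← Real.exp_log hPw]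
    apply Real.exp_lt_exp.2
    rw [Real.log_mul hl0.ne' (mul_pos h2p hPu).ne', Real.log_mul h2p.ne' hPu.ne',
      Real.log_rpow (by norm_num : (0:ℝ) < 2)]
    rw [hHsplit, hLdef] at hHu_gt
    linarith

section XLevel
variable {s t p : ℝ}

/-- Pointwise inequalities in x. -/
lemma xineqs (h0s : 0 < s) (hst : s < t) (hp2s : 2 * s ≤ p)
    (hp23 : 2 / 3 * (s + t) ≤ p) (hexc : t = 2 * s → 2 * s < p)
    {x : ℝ} (hx : 0 < x) :
    (2 * Real.cosh (t * x)) ^ (p / t - 1) * Real.sinh (t * x)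
      < (2 * Real.cosh (s * x)) ^ (p / s - 1) * Real.sinh (s * x) ∧
    t * (Real.cosh (s * x) ^ (p / s - 1) * Real.sinh (s * x))
      < s * (Real.cosh (t * x) ^ (p / t - 1) * Real.sinh (t * x)) := by
  have h0t : 0 < t := lt_trans h0s hst
  have hp0 : 0 < p := by linarith
  set u : ℝ := Real.exp (-(2 * s * x)) with hudef
  set w : ℝ := Real.exp (-(2 * t * x)) with hwdef
  have hu0 : 0 < u := Real.exp_pos _
  have hu1 : u < 1 := by
    rw [hudef, Real.exp_lt_one_iff]
    nlinarith
  have hw0 : 0 < w := Real.exp_pos _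
  have hw1 : w < 1 := by
    rw [hwdef, Real.exp_lt_one_iff]
    nlinarith
  have hl : 1 < t / s := (one_lt_div h0s).2 hst
  have hweq : u ^ (t / s) = w := by
    rw [hudef, hwdef, ← Real.exp_log (Real.exp_pos (-(2 * s * x))), Real.log_exp,
      ← Real.exp_mul]
    congr 1
    field_simp
  have hα2 : 2 ≤ p / s := (le_div_iff₀ h0s).2 (by linarith)
  have hα3 : 2 * (1 + t / s) / 3 ≤ p / s := by
    rw [le_div_iff₀ h0s]
    have : 2 * (1 + t / s) / 3 * s = 2 / 3 * (s + t) := by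
      field_simp
    rw [this]
    exact hp23
  have hexc' : t / s = 2 → 2 < p / s := by
    intro h
    have ht2 : t = 2 * s := by
      field_simp at h
      linarith
    have := hexc ht2
    rw [lt_div_iff₀ h0s]
    linarith
  have hβeq : p / s / (t / s) = p / t := by
    field_simp
  obtain ⟨hM1, hM2⟩ := master hl hα2 hα3 hexc' hu0 hu1
  rw [hweq, hβeq] at hM1 hM2
  -- exponential rewrites
  have es : Real.exp (s * x) * u = Real.exp (-(s * x)) := by
    rw [hudef, ← Real.exp_add]; congr 1; ring
  have et : Real.exp (t * x) * w = Real.exp (-(t * x)) := by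
    rw [hwdef, ← Real.exp_add]; congr 1; ring
  have hcs : 2 * Real.cosh (s * x) = Real.exp (s * x) * (1 + u) := by
    rw [Real.cosh_eq, mul_add, mul_one, es]; ring
  have hct : 2 * Real.cosh (t * x) = Real.exp (t * x) * (1 + w) := by
    rw [Real.cosh_eq, mul_add, mul_one, et]; ring
  have hss : Real.sinh (s * x) = Real.exp (s * x) * (1 - u) / 2 := by
    rw [Real.sinh_eq, mul_sub, mul_one, es]
  have hst' : Real.sinh (t * x) = Real.exp (t * x) * (1 - w) / 2 := by
    rw [Real.sinh_eq, mul_sub, mul_one, et]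
  have hu1' : (0:ℝ) < 1 + u := by linarith
  have hw1' : (0:ℝ) < 1 + w := by linarith
  have hexps : ∀ γ : ℝ, (Real.exp (s * x)) ^ γ = Real.exp (s * x * γ) := by
    intro γ; rw [← Real.exp_mul]
  have hexpt : ∀ γ : ℝ, (Real.exp (t * x)) ^ γ = Real.exp (t * x * γ) := by
    intro γ; rw [← Real.exp_mul]
  have hps : s * x * (p / s - 1) + s * x = p * x := by field_simp; ring
  have hpt : t * x * (p / t - 1) + t * x = p * x := by field_simp; ring
  constructor
  · -- X1 from M1
    have lhs_eq : (2 * Real.cosh (s * x)) ^ (p / s - 1) * Real.sinh (s * x)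
        = Real.exp (p * x) / 2 * ((1 - u) * (1 + u) ^ (p / s - 1)) := by
      rw [hcs, Real.mul_rpow (Real.exp_pos _).le hu1'.le, hexps, hss, ← hps, Real.exp_add]
      ring
    have rhs_eq : (2 * Real.cosh (t * x)) ^ (p / t - 1) * Real.sinh (t * x)
        = Real.exp (p * x) / 2 * ((1 - w) * (1 + w) ^ (p / t - 1)) := by
      rw [hct, Real.mul_rpow (Real.exp_pos _).le hw1'.le, hexpt, hst', ← hpt, Real.exp_add]
      ring
    rw [lhs_eq, rhs_eq]
    have hcoef : (0:ℝ) < Real.exp (p * x) / 2 := by positivity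
    exact (mul_lt_mul_iff_right₀ hcoef).2 hM1
  · -- X2 from M2
    set Pu : ℝ := (1 - u) * (1 + u) ^ (p / s - 1) with hPudef
    set Pw : ℝ := (1 - w) * (1 + w) ^ (p / t - 1) with hPwdef
    set Cu : ℝ := Real.exp (p * x) / 2 * Pu with hCudef
    set Cw : ℝ := Real.exp (p * x) / 2 * Pw with hCwdef
    have hPu0 : 0 < Pu := mul_pos (by linarith) (Real.rpow_pos_of_pos hu1' _)
    have hPw0 : 0 < Pw := mul_pos (by linarith) (Real.rpow_pos_of_pos hw1' _)
    have hCu0 : 0 < Cu := mul_pos (by positivity) hPu0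
    have key_s : (2:ℝ) ^ (p / s - 1) * (Real.cosh (s * x) ^ (p / s - 1) * Real.sinh (s * x))
        = Cu := by
      rw [← mul_assoc, ← Real.mul_rpow (by norm_num : (0:ℝ) ≤ 2) (Real.cosh_pos _).le]
      rw [hCudef, hPudef, hcs, Real.mul_rpow (Real.exp_pos _).le hu1'.le, hexps, hss,
        ← hps, Real.exp_add]
      ring
    have key_t : (2:ℝ) ^ (p / t - 1) * (Real.cosh (t * x) ^ (p / t - 1) * Real.sinh (t * x))
        = Cw := by
      rw [← mul_assoc, ← Real.mul_rpow (by norm_num : (0:ℝ) ≤ 2) (Real.cosh_pos _).le]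
      rw [hCwdef, hPwdef, hct, Real.mul_rpow (Real.exp_pos _).le hw1'.le, hexpt, hst',
        ← hpt, Real.exp_add]
      ring
    have c_s : Real.cosh (s * x) ^ (p / s - 1) * Real.sinh (s * x)
        = (2:ℝ) ^ (1 - p / s) * Cu := by
      have h2 : ((2:ℝ) ^ (1 - p / s)) * ((2:ℝ) ^ (p / s - 1)) = 1 := by
        rw [← Real.rpow_add (by norm_num : (0:ℝ) < 2)]; norm_num
      calc Real.cosh (s * x) ^ (p / s - 1) * Real.sinh (s * x)
          = (((2:ℝ) ^ (1 - p / s)) * ((2:ℝ) ^ (p / s - 1)))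
            * (Real.cosh (s * x) ^ (p / s - 1) * Real.sinh (s * x)) := by rw [h2, one_mul]
        _ = (2:ℝ) ^ (1 - p / s) * ((2:ℝ) ^ (p / s - 1)
            * (Real.cosh (s * x) ^ (p / s - 1) * Real.sinh (s * x))) := by ring
        _ = (2:ℝ) ^ (1 - p / s) * Cu := by rw [key_s]
    have c_t : Real.cosh (t * x) ^ (p / t - 1) * Real.sinh (t * x)
        = (2:ℝ) ^ (1 - p / t) * Cw := by
      have h2 : ((2:ℝ) ^ (1 - p / t)) * ((2:ℝ) ^ (p / t - 1)) = 1 := by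
        rw [← Real.rpow_add (by norm_num : (0:ℝ) < 2)]; norm_num
      calc Real.cosh (t * x) ^ (p / t - 1) * Real.sinh (t * x)
          = (((2:ℝ) ^ (1 - p / t)) * ((2:ℝ) ^ (p / t - 1)))
            * (Real.cosh (t * x) ^ (p / t - 1) * Real.sinh (t * x)) := by rw [h2, one_mul]
        _ = (2:ℝ) ^ (1 - p / t) * ((2:ℝ) ^ (p / t - 1)
            * (Real.cosh (t * x) ^ (p / t - 1) * Real.sinh (t * x))) := by ring
        _ = (2:ℝ) ^ (1 - p / t) * Cw := by rw [key_t]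
    rw [c_s, c_t]
    -- from hM2 : t/s * (2^(p/t - p/s) * Pu) < Pw
    have hM2' : t / s * ((2:ℝ) ^ (p / t - p / s) * Cu) < Cw := by
      have := mul_lt_mul_of_pos_left hM2 (by positivity : (0:ℝ) < Real.exp (p * x) / 2)
      rw [hCudef, hCwdef]
      calc t / s * ((2:ℝ) ^ (p / t - p / s) * (Real.exp (p * x) / 2 * Pu))
          = Real.exp (p * x) / 2 * (t / s * ((2:ℝ) ^ (p / t - p / s) * Pu)) := by ring
        _ < Real.exp (p * x) / 2 * Pw := this
    have hstep := mul_lt_mul_of_pos_left hM2'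
      (by positivity : (0:ℝ) < s * (2:ℝ) ^ (1 - p / t))
    have hsimp : s * (2:ℝ) ^ (1 - p / t) * (t / s * ((2:ℝ) ^ (p / t - p / s) * Cu))
        = t * ((2:ℝ) ^ (1 - p / t) * (2:ℝ) ^ (p / t - p / s)) * Cu := by
      field_simp
    have h2c : (2:ℝ) ^ (1 - p / t) * (2:ℝ) ^ (p / t - p / s) = (2:ℝ) ^ (1 - p / s) := by
      rw [← Real.rpow_add (by norm_num : (0:ℝ) < 2)]; ring_nf
    rw [hsimp, h2c] at hstep
    calc t * ((2:ℝ) ^ (1 - p / s) * Cu) = t * (2:ℝ) ^ (1 - p / s) * Cu := by ring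
      _ < s * (2:ℝ) ^ (1 - p / t) * Cw := hstep
      _ = s * ((2:ℝ) ^ (1 - p / t) * Cw) := by ring

end XLevel

section Integrated
variable {s t p : ℝ}

lemma upper_int (h0s : 0 < s) (hst : s < t) (hp2s : 2 * s ≤ p)
    (hp23 : 2 / 3 * (s + t) ≤ p) (hexc : t = 2 * s → 2 * s < p)
    {y : ℝ} (hy : 0 < y) :
    t * (Real.cosh (s * y) ^ (p / s) - 1) < s * (Real.cosh (t * y) ^ (p / t) - 1) := by
  have h0t : 0 < t := lt_trans h0s hst
  have hp0 : 0 < p := by linarith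
  have key : 0 < s * Real.cosh (t * y) ^ (p / t) - t * Real.cosh (s * y) ^ (p / s) + (t - s) := by
    apply pos_of_hasDeriv
      (f := fun x => s * Real.cosh (t * x) ^ (p / t) - t * Real.cosh (s * x) ^ (p / s) + (t - s))
      (f' := fun x => p * (s * (Real.cosh (t * x) ^ (p / t - 1) * Real.sinh (t * x))
        - t * (Real.cosh (s * x) ^ (p / s - 1) * Real.sinh (s * x)))) hy
    · intro x _
      have hdt := (hd_cosh_mul t x).rpow_const (p := p / t) (Or.inl (Real.cosh_pos _).ne')
      have hds := (hd_cosh_mul s x).rpow_const (p := p / s) (Or.inl (Real.cosh_pos _).ne')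
      have := ((hdt.const_mul s).sub (hds.const_mul t)).add_const (t - s)
      refine this.congr_deriv ?_
      field_simp
    · intro x hx
      have h2 := (xineqs h0s hst hp2s hp23 hexc hx.1).2
      have : 0 < s * (Real.cosh (t * x) ^ (p / t - 1) * Real.sinh (t * x))
          - t * (Real.cosh (s * x) ^ (p / s - 1) * Real.sinh (s * x)) := by linarith
      exact mul_pos hp0 this
    · simp [Real.one_rpow]
  linarith

lemma lower_int (h0s : 0 < s) (hst : s < t) (hp2s : 2 * s ≤ p)
    (hp23 : 2 / 3 * (s + t) ≤ p) (hexc : t = 2 * s → 2 * s < p)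
    {y : ℝ} (hy : 0 < y) :
    (2:ℝ) ^ (p / t) * (Real.cosh (t * y) ^ (p / t) - 1)
      < (2:ℝ) ^ (p / s) * (Real.cosh (s * y) ^ (p / s) - 1) := by
  have h0t : 0 < t := lt_trans h0s hst
  have hp0 : 0 < p := by linarith
  have key : 0 < (2 * Real.cosh (s * y)) ^ (p / s) - (2 * Real.cosh (t * y)) ^ (p / t)
      - (2:ℝ) ^ (p / s) + (2:ℝ) ^ (p / t) := by
    apply pos_of_hasDeriv
      (f := fun x => (2 * Real.cosh (s * x)) ^ (p / s) - (2 * Real.cosh (t * x)) ^ (p / t)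
        - (2:ℝ) ^ (p / s) + (2:ℝ) ^ (p / t))
      (f' := fun x => 2 * p * ((2 * Real.cosh (s * x)) ^ (p / s - 1) * Real.sinh (s * x)
        - (2 * Real.cosh (t * x)) ^ (p / t - 1) * Real.sinh (t * x))) hy
    · intro x _
      have hgs : HasDerivAt (fun x => 2 * Real.cosh (s * x)) (2 * (s * Real.sinh (s * x))) x :=
        (hd_cosh_mul s x).const_mul 2
      have hgt : HasDerivAt (fun x => 2 * Real.cosh (t * x)) (2 * (t * Real.sinh (t * x))) x :=
        (hd_cosh_mul t x).const_mul 2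
      have h2cs : (0:ℝ) < 2 * Real.cosh (s * x) := by positivity
      have h2ct : (0:ℝ) < 2 * Real.cosh (t * x) := by positivity
      have hds := hgs.rpow_const (p := p / s) (Or.inl h2cs.ne')
      have hdt := hgt.rpow_const (p := p / t) (Or.inl h2ct.ne')
      have := ((hds.sub hdt).sub_const ((2:ℝ) ^ (p / s))).add_const ((2:ℝ) ^ (p / t))
      refine this.congr_deriv ?_
      field_simp
    · intro x hx
      have h1 := (xineqs h0s hst hp2s hp23 hexc hx.1).1
      have : 0 < (2 * Real.cosh (s * x)) ^ (p / s - 1) * Real.sinh (s * x)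
          - (2 * Real.cosh (t * x)) ^ (p / t - 1) * Real.sinh (t * x) := by linarith
      positivity
    · norm_num
  have es : (2 * Real.cosh (s * y)) ^ (p / s) = (2:ℝ) ^ (p / s) * Real.cosh (s * y) ^ (p / s) :=
    Real.mul_rpow (by norm_num) (Real.cosh_pos _).le
  have et : (2 * Real.cosh (t * y)) ^ (p / t) = (2:ℝ) ^ (p / t) * Real.cosh (t * y) ^ (p / t) :=
    Real.mul_rpow (by norm_num) (Real.cosh_pos _).le
  rw [es, et] at key
  nlinarith [key]

end Integrated

/-- The power mean of order `r` of `a` and `b`. -/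
noncomputable def powerMean (r a b : ℝ) : ℝ := ((a ^ r + b ^ r) / 2) ^ (1 / r)

/-- The geometric mean of `a` and `b`. -/
noncomputable def geomMean (a b : ℝ) : ℝ := Real.sqrt (a * b)

lemma main_aux {s t p : ℝ} (h0s : 0 < s) (hst : s < t) (hp2s : 2 * s ≤ p)
    (hp23 : 2 / 3 * (s + t) ≤ p) (hexc : t = 2 * s → 2 * s < p)
    {a b : ℝ} (hb : 0 < b) (hba : b < a) :
    (2 : ℝ) ^ (p / t - p / s) <
      (powerMean s a b ^ p - geomMean a b ^ p) /
        (powerMean t a b ^ p - geomMean a b ^ p) ∧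
    (powerMean s a b ^ p - geomMean a b ^ p) /
        (powerMean t a b ^ p - geomMean a b ^ p) < s / t := by
  have h0t : 0 < t := lt_trans h0s hst
  have hp0 : 0 < p := by linarith
  have ha : 0 < a := lt_trans hb hba
  have hab0 : 0 < a * b := mul_pos ha hb
  have hdiv1 : 1 < a / b := (one_lt_div hb).2 hba
  have hdiv0 : 0 < a / b := lt_trans one_pos hdiv1
  set y : ℝ := Real.log (a / b) / 2 with hydef
  have hy : 0 < y := by
    have := Real.log_pos hdiv1
    simp only [hydef]; linarith
  -- power mean in cosh form
  have pm : ∀ r : ℝ, r ≠ 0 → powerMean r a b ^ p = (a * b) ^ (p / 2) * Real.cosh (r * y) ^ (p / r) := by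
    intro r hr
    have hexp1 : Real.exp (r * y) = (a / b) ^ (r / 2) := by
      rw [Real.rpow_def_of_pos hdiv0]
      congr 1
      simp only [hydef]; ring
    have hexp2 : Real.exp (-(r * y)) = (a / b) ^ (-(r / 2)) := by
      rw [Real.rpow_def_of_pos hdiv0]
      congr 1
      simp only [hydef]; ring
    have hexp2' : Real.exp (-(r * y)) = (b / a) ^ (r / 2) := by
      rw [hexp2, Real.rpow_neg hdiv0.le, ← Real.inv_rpow hdiv0.le, inv_div]
    have har : (a * b) ^ (r / 2) * (a / b) ^ (r / 2) = a ^ r := by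
      rw [← Real.mul_rpow hab0.le (div_nonneg ha.le hb.le)]
      have h1 : a * b * (a / b) = a ^ (2:ℝ) := by
        rw [Real.rpow_two]; field_simp
      rw [h1, ← Real.rpow_mul ha.le]
      congr 1; ring
    have hbr : (a * b) ^ (r / 2) * (b / a) ^ (r / 2) = b ^ r := by
      rw [← Real.mul_rpow hab0.le (div_nonneg hb.le ha.le)]
      have h1 : a * b * (b / a) = b ^ (2:ℝ) := by
        rw [Real.rpow_two]; field_simp
      rw [h1, ← Real.rpow_mul hb.le]
      congr 1; ring
    have key : (a ^ r + b ^ r) / 2 = (a * b) ^ (r / 2) * Real.cosh (r * y) := by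
      rw [Real.cosh_eq, hexp1, hexp2']
      rw [← har, ← hbr]
      ring
    have hbase : (0:ℝ) < (a ^ r + b ^ r) / 2 := by
      have := Real.rpow_pos_of_pos ha r
      have := Real.rpow_pos_of_pos hb r
      linarith
    rw [powerMean, ← Real.rpow_mul hbase.le]
    rw [show (1:ℝ) / r * p = p / r from by ring]
    rw [key, Real.mul_rpow (Real.rpow_nonneg hab0.le _) (Real.cosh_pos _).le]
    rw [← Real.rpow_mul hab0.le]
    rw [show r / 2 * (p / r) = p / 2 from by field_simp]
  have gm : geomMean a b ^ p = (a * b) ^ (p / 2) := by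
    rw [geomMean, Real.sqrt_eq_rpow, ← Real.rpow_mul hab0.le]
    rw [show (1:ℝ) / 2 * p = p / 2 from by ring]
  set M : ℝ := (a * b) ^ (p / 2) with hMdef
  have hM0 : 0 < M := Real.rpow_pos_of_pos hab0 _
  set Cs : ℝ := Real.cosh (s * y) ^ (p / s) with hCsdef
  set Ct : ℝ := Real.cosh (t * y) ^ (p / t) with hCtdef
  have hCt1 : 1 < Ct := by
    rw [hCtdef]
    apply Real.one_lt_rpow_iff_of_pos (Real.cosh_pos _) |>.2
    left
    exact ⟨Real.one_lt_cosh.2 (mul_pos h0t hy).ne', div_pos hp0 h0t⟩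
  have frac_eq : (powerMean s a b ^ p - geomMean a b ^ p) /
      (powerMean t a b ^ p - geomMean a b ^ p) = (Cs - 1) / (Ct - 1) := by
    rw [pm s h0s.ne', pm t h0t.ne', gm]
    rw [show M * Cs - M = M * (Cs - 1) from by ring, show M * Ct - M = M * (Ct - 1) from by ring]
    exact mul_div_mul_left _ _ hM0.ne'
  have hup := upper_int h0s hst hp2s hp23 hexc hy
  have hlo := lower_int h0s hst hp2s hp23 hexc hy
  rw [← hCsdef, ← hCtdef] at hup hlo
  rw [frac_eq]
  constructor
  · -- lower bound
    rw [lt_div_iff₀ (by linarith : (0:ℝ) < Ct - 1)]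
    have h2s0 : (0:ℝ) < (2:ℝ) ^ (p / s) := Real.rpow_pos_of_pos (by norm_num) _
    have e1 : (2:ℝ) ^ (p / t - p / s) = (2:ℝ) ^ (p / t) * ((2:ℝ) ^ (p / s))⁻¹ := by
      rw [Real.rpow_sub (by norm_num : (0:ℝ) < 2), div_eq_mul_inv]
    have step := mul_lt_mul_of_pos_left hlo (inv_pos.2 h2s0)
    calc (2:ℝ) ^ (p / t - p / s) * (Ct - 1)
        = ((2:ℝ) ^ (p / s))⁻¹ * ((2:ℝ) ^ (p / t) * (Ct - 1)) := by rw [e1]; ring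
      _ < ((2:ℝ) ^ (p / s))⁻¹ * ((2:ℝ) ^ (p / s) * (Cs - 1)) := step
      _ = Cs - 1 := by rw [← mul_assoc, inv_mul_cancel₀ h2s0.ne', one_mul]
  · -- upper bound
    rw [div_lt_div_iff₀ (by linarith : (0:ℝ) < Ct - 1) h0t]
    linarith

/-- Theorem 3.1(a), first part. -/
theorem ratio_bounds_pos_large_p (s t p : ℝ) (hs : s ≠ 0) (ht : t ≠ 0) (hp : p ≠ 0)
    (h0s : 0 < s) (hst : s < t)
    (hpge : max (2 * s) (2 / 3 * (s + t)) ≤ p)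
    (hexc : t = 2 * s → 2 * s < p) :
    ∀ a b : ℝ, 0 < a → 0 < b → a ≠ b →
      (2 : ℝ) ^ (p / t - p / s) <
        (powerMean s a b ^ p - geomMean a b ^ p) /
          (powerMean t a b ^ p - geomMean a b ^ p) ∧
      (powerMean s a b ^ p - geomMean a b ^ p) /
          (powerMean t a b ^ p - geomMean a b ^ p) < s / t := by
  intro a b ha hb hab
  have hp2s : 2 * s ≤ p := le_trans (le_max_left _ _) hpge
  have hp23 : 2 / 3 * (s + t) ≤ p := le_trans (le_max_right _ _) hpge
  rcases lt_or_gt_of_ne hab with h | h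
  · have := main_aux h0s hst hp2s hp23 hexc ha h
    have hswap1 : ∀ r : ℝ, powerMean r b a = powerMean r a b := by
      intro r; rw [powerMean, powerMean, add_comm]
    have hswap2 : geomMean b a = geomMean a b := by rw [geomMean, geomMean, mul_comm]
    rwa [hswap1, hswap1, hswap2] at this
  · exact main_aux h0s hst hp2s hp23 hexc hb h
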